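/- Let (α,β) ∈ U and let (m̄_k)_{k≥1} be a nondecreasing sequence of integers with m̄_1 ≥ 1 (and m̄_0 := 0). If there exists x̃ ∈ [0,1] with x̃ ≠ β such that x̃ follows the pattern R L^{m_1} R L^{m_2} R L^{m_3} ⋯ under T_{α,β}, then |Θ(α,β)| ≥ |x̃ − β|; in particular Θ(α,β) ≠ 0. -/

import Mathlib

/-- The skew tent map `T_{α,β}`. -/
noncomputable def T (α β x : ℝ) : ℝ :=
  if x ≤ α then β / α * x else β / (1 - α) * (1 - x)

/-- The auxiliary function `Θ` associated to the sequence `m̄` (with `m̄ 0 = 0`):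
`Θ(α,β) = 1 - β + ∑_{k=1}^∞ ((α-1)/β)^k (α/β)^{m̄_k}`. -/
noncomputable def theta (m : ℕ → ℕ) (α β : ℝ) : ℝ :=
  1 - β + ∑' k : ℕ, ((α - 1) / β) ^ (k + 1) * (α / β) ^ (m (k + 1))

/-- If `(α,β) ∈ U` and some `x̃ ∈ [0,1]`, `x̃ ≠ β`, follows the pattern
`R L^{m_1} R L^{m_2} ⋯` under `T_{α,β}`, then `|Θ(α,β)| ≥ |x̃ - β|`; in particular
`Θ(α,β) ≠ 0`. -/
theorem stmt1 (α β : ℝ) (hβ1 : 1 / 2 < β) (hβ2 : β ≤ 1)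
    (hα1 : 1 - β < α) (hα2 : α < β)
    (m : ℕ → ℕ) (hm0 : m 0 = 0) (hm1 : 1 ≤ m 1) (hmono : Monotone m)
    (x : ℝ) (hx0 : 0 ≤ x) (hx1 : x ≤ 1) (hxβ : x ≠ β)
    (hpat : ∀ n : ℕ,
      ((∃ k : ℕ, n = k + m k) → α < (T α β)^[n] x) ∧
      ((¬ ∃ k : ℕ, n = k + m k) → (T α β)^[n] x < α)) :
    |x - β| ≤ |theta m α β| ∧ theta m α β ≠ 0 := by
  have hβ0 : (0:ℝ) < β := lt_trans (by norm_num) hβ1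
  have hα0 : (0:ℝ) < α := by linarith
  have hα1' : α < 1 := by linarith
  have h1α : (0:ℝ) < 1 - α := by linarith
  set r : ℝ := (α - 1) / β with hrdef
  set s : ℝ := α / β with hsdef
  have hs0 : 0 < s := div_pos hα0 hβ0
  have hs1 : s < 1 := (div_lt_one hβ0).mpr hα2
  have habsr : |r| = (1 - α) / β := by
    rw [hrdef, abs_div, abs_of_pos hβ0, abs_of_neg (by linarith : α - 1 < 0)]
    ring_nf
  have hr0 : (0:ℝ) ≤ (1 - α) / β := le_of_lt (div_pos h1α hβ0)
  have hr1 : (1 - α) / β < 1 := (div_lt_one hβ0).mpr (by linarith)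
  -- orbit stays in [0,1]
  have horb : ∀ n : ℕ, 0 ≤ (T α β)^[n] x ∧ (T α β)^[n] x ≤ 1 := by
    intro n
    induction n with
    | zero => exact ⟨hx0, hx1⟩
    | succ n ih =>
      rw [Function.iterate_succ_apply']
      set y := (T α β)^[n] x with hy
      unfold T
      split
      · constructor
        · exact mul_nonneg (le_of_lt (div_pos hβ0 hα0)) ih.1
        · calc β / α * y ≤ β / α * α := by
                apply mul_le_mul_of_nonneg_left (by assumption) (le_of_lt (div_pos hβ0 hα0))
            _ = β := by field_simp
            _ ≤ 1 := hβ2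
      · rename_i h
        push_neg at h
        constructor
        · exact mul_nonneg (le_of_lt (div_pos hβ0 h1α)) (by linarith [ih.2])
        · calc β / (1 - α) * (1 - y) ≤ β / (1 - α) * (1 - α) := by
                apply mul_le_mul_of_nonneg_left (by linarith) (le_of_lt (div_pos hβ0 h1α))
            _ = β := by field_simp
            _ ≤ 1 := hβ2
  -- branch lemmas for T
  have hTright : ∀ y : ℝ, α < y → T α β y = β / (1 - α) * (1 - y) := by
    intro y hy
    unfold T
    rw [if_neg (not_le.mpr hy)]
  have hTleft : ∀ y : ℝ, y ≤ α → T α β y = β / α * y := by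
    intro y hy
    unfold T
    rw [if_pos hy]
  -- R-step inverse relation
  have hR : ∀ n : ℕ, α < (T α β)^[n] x →
      (T α β)^[n] x = 1 + r * (T α β)^[n+1] x := by
    intro n h
    rw [Function.iterate_succ_apply', hTright _ h, hrdef]
    field_simp
    ring
  -- L-step inverse relation
  have hL : ∀ n : ℕ, (T α β)^[n] x < α →
      (T α β)^[n] x = s * (T α β)^[n+1] x := by
    intro n h
    rw [Function.iterate_succ_apply', hTleft _ (le_of_lt h), hsdef]
    field_simp
  -- k ↦ k + m k is strictly monotone
  have hf : StrictMono (fun k : ℕ => k + m k) := by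
    apply strictMono_nat_of_lt_succ
    intro k
    have : m k ≤ m (k+1) := hmono (by omega)
    show k + m k < (k+1) + m (k+1)
    omega
  -- L-block relation
  have hblock : ∀ k j : ℕ, j ≤ m (k+1) - m k →
      (T α β)^[k+1+m k] x = s ^ j * (T α β)^[k+1+m k + j] x := by
    intro k j
    induction j with
    | zero => intro _; simp
    | succ j ih =>
      intro hj
      have hmk : m k ≤ m (k+1) := hmono (by omega : k ≤ k+1)
      have hj' : j ≤ m (k+1) - m k := by omega
      have hnR : ¬ ∃ i : ℕ, k+1+m k + j = i + m i := by
        rintro ⟨i, hi⟩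
        have h1 : (fun k : ℕ => k + m k) k < (fun k : ℕ => k + m k) i := by
          show k + m k < i + m i; omega
        have h2 : (fun k : ℕ => k + m k) i < (fun k : ℕ => k + m k) (k+1) := by
          show i + m i < (k+1) + m (k+1); omega
        have hk1 : k < i := hf.lt_iff_lt.mp h1
        have hk2 : i < k + 1 := hf.lt_iff_lt.mp h2
        omega
      have hstep : (T α β)^[k+1+m k + j] x = s * (T α β)^[k+1+m k + j + 1] x :=
        hL _ ((hpat _).2 hnR)
      rw [ih hj', hstep, show k+1+m k + (j+1) = k+1+m k + j + 1 by omega, pow_succ]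
      ring
  -- main telescoping identity
  have hmain : ∀ N : ℕ, x - ∑ i ∈ Finset.range N, r ^ i * s ^ (m i) =
      r ^ N * s ^ (m N) * (T α β)^[N + m N] x := by
    intro N
    induction N with
    | zero => simp [hm0]
    | succ N ih =>
      have hmk : m N ≤ m (N+1) := hmono (by omega : N ≤ N+1)
      have hRstep : (T α β)^[N + m N] x = 1 + r * (T α β)^[N + m N + 1] x :=
        hR _ ((hpat _).1 ⟨N, rfl⟩)
      have hblockstep := hblock N (m (N+1) - m N) le_rfl
      rw [show N+1+m N + (m (N+1) - m N) = (N+1) + m (N+1) by omega] at hblockstep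
      rw [show N+1+m N = N + m N + 1 by omega] at hblockstep
      have hspow : s ^ (m N) * s ^ (m (N+1) - m N) = s ^ (m (N+1)) := by
        rw [← pow_add, Nat.add_sub_cancel' hmk]
      rw [Finset.sum_range_succ]
      have : x - ∑ i ∈ Finset.range N, r ^ i * s ^ (m i) - r ^ N * s ^ (m N) =
          r ^ N * s ^ (m N) * ((T α β)^[N + m N] x - 1) := by rw [ih]; ring
      calc x - (∑ i ∈ Finset.range N, r ^ i * s ^ (m i) + r ^ N * s ^ (m N))
          = r ^ N * s ^ (m N) * ((T α β)^[N + m N] x - 1) := by rw [← this]; ring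
        _ = r ^ N * s ^ (m N) * (r * (T α β)^[N + m N + 1] x) := by rw [hRstep]; ring
        _ = r ^ (N+1) * s ^ (m (N+1)) * (T α β)^[(N+1) + m (N+1)] x := by
            rw [hblockstep, ← hspow, pow_succ]; ring
  -- summability
  have hbound : ∀ k : ℕ, ‖r ^ k * s ^ (m k)‖ ≤ ((1 - α) / β) ^ k := by
    intro k
    rw [Real.norm_eq_abs, abs_mul, abs_pow, abs_pow, habsr, abs_of_pos hs0]
    calc ((1-α)/β) ^ k * s ^ (m k) ≤ ((1-α)/β) ^ k * 1 := by
          apply mul_le_mul_of_nonneg_left (pow_le_one₀ (le_of_lt hs0) (le_of_lt hs1))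
            (pow_nonneg hr0 k)
      _ = ((1-α)/β) ^ k := by ring
  have hsum : Summable (fun k : ℕ => r ^ k * s ^ (m k)) :=
    Summable.of_norm_bounded (summable_geometric_of_lt_one hr0 hr1) hbound
  set S : ℝ := ∑' k : ℕ, r ^ k * s ^ (m k) with hSdef
  -- the remainder term tends to 0
  have hrem : Filter.Tendsto (fun N : ℕ => r ^ N * s ^ (m N) * (T α β)^[N + m N] x)
      Filter.atTop (nhds 0) := by
    refine squeeze_zero_norm (a := fun N : ℕ => ((1 - α) / β) ^ N) ?_
      (tendsto_pow_atTop_nhds_zero_of_lt_one hr0 hr1)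
    · intro N
      rw [Real.norm_eq_abs, abs_mul]
      calc |r ^ N * s ^ (m N)| * |(T α β)^[N + m N] x| ≤ ((1-α)/β) ^ N * 1 := by
            apply mul_le_mul (hbound N) _ (abs_nonneg _) (pow_nonneg hr0 N)
            rw [abs_le]
            exact ⟨by linarith [(horb (N + m N)).1], (horb (N + m N)).2⟩
        _ = ((1-α)/β) ^ N := by ring
  -- partial sums tend to S
  have hpsum : Filter.Tendsto (fun N : ℕ => ∑ i ∈ Finset.range N, r ^ i * s ^ (m i))
      Filter.atTop (nhds S) := hsum.hasSum.tendsto_sum_nat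
  have hxS : x = S := by
    have h1 : Filter.Tendsto (fun N : ℕ => x - ∑ i ∈ Finset.range N, r ^ i * s ^ (m i))
        Filter.atTop (nhds (x - S)) := Filter.Tendsto.const_sub x hpsum
    have h2 : Filter.Tendsto (fun N : ℕ => x - ∑ i ∈ Finset.range N, r ^ i * s ^ (m i))
        Filter.atTop (nhds 0) := by
      simp only [hmain]
      exact hrem
    have := tendsto_nhds_unique h1 h2
    linarith [this]
  -- identify theta with S - β
  have htheta : theta m α β = x - β := by
    have hzero : S = (fun k : ℕ => r ^ k * s ^ (m k)) 0 +
        ∑' k : ℕ, r ^ (k+1) * s ^ (m (k+1)) := Summable.tsum_eq_zero_add hsum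
    have hf0 : (fun k : ℕ => r ^ k * s ^ (m k)) 0 = 1 := by simp [hm0]
    unfold theta
    rw [← hrdef, ← hsdef]
    rw [hf0] at hzero
    rw [hxS]
    linarith [hzero]
  rw [htheta]
  exact ⟨le_refl _, sub_ne_zero.mpr hxβ⟩
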